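/- Let m ≥ 1 and let b_1, …, b_m be integers with b_i ≡ 2 (mod 4) for all i; write a_i = b_i/2 (so each a_i is odd). Then the polynomial ∇(z) = (1,0) · (∏_{i=1}^m [[(−1)^i a_i z, 1],[1,0]]) · (1,0)ᵀ ∈ ℤ[z] is congruent modulo 2 to the Fibonacci polynomial f_{m+1}(z), i.e. the images of ∇ and f_{m+1} in (ℤ/2ℤ)[z] coincide. (By Conway's formula, ∇ is the Conway polynomial of the rational link C(b_1,…,b_m).) -/

import Mathlib

open Polynomial

/-- The Fibonacci polynomials `f₀ = 0`, `f₁ = 1`, `f_{m+1} = z f_m + f_{m-1}`. -/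
noncomputable def fibPoly : ℕ → Polynomial ℤ
  | 0 => 0
  | 1 => 1
  | (m + 2) => X * fibPoly (m + 1) + fibPoly m

noncomputable def fibP2 (n : ℕ) : Polynomial (ZMod 2) :=
  Polynomial.map (Int.castRingHom (ZMod 2)) (fibPoly n)

noncomputable def NN : Matrix (Fin 2) (Fin 2) (Polynomial (ZMod 2)) := !![X, 1; 1, 0]

lemma fibP2_rec (n : ℕ) : fibP2 (n + 2) = X * fibP2 (n + 1) + fibP2 n := by
  simp [fibP2, fibPoly, Polynomial.map_add, Polynomial.map_mul]

lemma NN_pow (k : ℕ) :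
    NN ^ (k + 1) = !![fibP2 (k + 2), fibP2 (k + 1); fibP2 (k + 1), fibP2 k] := by
  induction k with
  | zero =>
      have h0 : fibP2 0 = 0 := by simp [fibP2, fibPoly]
      have h1 : fibP2 1 = 1 := by simp [fibP2, fibPoly]
      have h2 : fibP2 2 = X := by simp [fibP2, fibPoly]
      simp [NN, h0, h1, h2]
  | succ n ih =>
      rw [pow_succ, ih]
      ext i j
      fin_cases i <;> fin_cases j <;>
        simp [NN, Matrix.mul_apply, Fin.sum_univ_two, fibP2_rec] <;> ring

theorem conway_poly_mod_two_of_two_mod_four (m : ℕ) (hm : 1 ≤ m)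
    (b : Fin m → ℤ) (hb : ∀ i, b i % 4 = 2) :
    Polynomial.map (Int.castRingHom (ZMod 2))
        (((List.ofFn fun i : Fin m =>
            (!![(-1) ^ ((i : ℕ) + 1) * C (b i / 2) * X, 1; 1, 0] :
              Matrix (Fin 2) (Fin 2) (Polynomial ℤ))).prod) 0 0) =
      Polynomial.map (Int.castRingHom (ZMod 2)) (fibPoly (m + 1)) := by
  set φ := Polynomial.mapRingHom (Int.castRingHom (ZMod 2)) with hφ
  have key : ∀ i : Fin m,
      φ.mapMatrix (!![(-1) ^ ((i : ℕ) + 1) * C (b i / 2) * X, 1; 1, 0] :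
        Matrix (Fin 2) (Fin 2) (Polynomial ℤ)) = NN := by
    intro i
    have hodd : ∃ k : ℤ, b i / 2 = 2 * k + 1 := ⟨b i / 4, by have := hb i; omega⟩
    obtain ⟨k, hk⟩ := hodd
    have hc : ((b i / 2 : ℤ) : ZMod 2) = 1 := by
      rw [hk]; push_cast; rw [show ((2:ZMod 2)) = 0 from rfl]; ring
    ext x y
    fin_cases x <;> fin_cases y <;>
      simp [NN, RingHom.mapMatrix_apply, hφ, Polynomial.coe_mapRingHom, hc,
        Polynomial.map_mul, Polynomial.map_pow, CharTwo.neg_eq]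
  have hprod : φ.mapMatrix ((List.ofFn fun i : Fin m =>
      (!![(-1) ^ ((i : ℕ) + 1) * C (b i / 2) * X, 1; 1, 0] :
        Matrix (Fin 2) (Fin 2) (Polynomial ℤ))).prod) = NN ^ m := by
    rw [map_list_prod, List.map_ofFn]
    have : (List.ofFn (φ.mapMatrix ∘ fun i : Fin m =>
        (!![(-1) ^ ((i : ℕ) + 1) * C (b i / 2) * X, 1; 1, 0] :
          Matrix (Fin 2) (Fin 2) (Polynomial ℤ)))) = List.ofFn (fun _ : Fin m => NN) := by
      congr 1
      funext i
      exact key i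
    rw [this, List.ofFn_const, List.prod_replicate]
  obtain ⟨k, rfl⟩ : ∃ k, m = k + 1 := ⟨m - 1, by omega⟩
  have := congrArg (fun M => M 0 0) hprod
  beta_reduce at this
  have hlhs : Polynomial.map (Int.castRingHom (ZMod 2))
      (((List.ofFn fun i : Fin (k + 1) =>
          (!![(-1) ^ ((i : ℕ) + 1) * C (b i / 2) * X, 1; 1, 0] :
            Matrix (Fin 2) (Fin 2) (Polynomial ℤ))).prod) 0 0) =
      (NN ^ (k + 1)) 0 0 := by
    rw [← this]
    simp [hφ, RingHom.mapMatrix_apply, Matrix.map_apply]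
  rw [hlhs, NN_pow]
  simp [fibP2]
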